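/- Let A be a commutative ring with unity, let B be a finitely generated commutative A-algebra, and let f : B → B be a surjective A-algebra endomorphism of B. Then f is an A-algebra isomorphism (i.e., f is bijective). -/

import Mathlib

/-- A surjective ring endomorphism of a Noetherian commutative ring is injective. -/
theorem surj_endo_inj_of_noetherian {R : Type*} [CommRing R] [IsNoetherianRing R]
    (g : R →+* R) (hg : Function.Surjective g) : Function.Injective g := by
  -- kernels of iterates
  let G : ℕ → R →+* R := fun n => Nat.rec (RingHom.id R) (fun _ h => g.comp h) n
  have hGs : ∀ n, G (n + 1) = g.comp (G n) := fun n => rfl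
  have hGsurj : ∀ n, Function.Surjective (G n) := by
    intro n
    induction n with
    | zero => exact fun y => ⟨y, rfl⟩
    | succ n ih => exact hg.comp ih
  have hmono : Monotone fun n => RingHom.ker (G n) := by
    apply monotone_nat_of_le_succ
    intro n x hx
    rw [RingHom.mem_ker] at hx ⊢
    rw [hGs, RingHom.comp_apply, hx, map_zero]
  obtain ⟨n, hn⟩ := monotone_stabilizes_iff_noetherian.2 (inferInstance : IsNoetherianRing R)
    ⟨fun n => RingHom.ker (G n), hmono⟩
  intro a b hab
  have key : ∀ x : R, g x = 0 → x = 0 := by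
    intro x hx
    obtain ⟨y, hy⟩ := hGsurj n x
    have hy2 : y ∈ RingHom.ker (G (n + 1)) := by
      rw [RingHom.mem_ker, hGs, RingHom.comp_apply, hy, hx]
    have heq := hn (n + 1) (Nat.le_succ n)
    change RingHom.ker (G n) = RingHom.ker (G (n + 1)) at heq
    rw [← heq] at hy2
    rw [RingHom.mem_ker] at hy2
    rw [← hy, hy2]
  have h := key (a - b) (by rw [map_sub, hab, sub_self])
  exact sub_eq_zero.mp h

/-- **Orzech–Ribes.** A surjective `A`-algebra endomorphism of a finitely generated
commutative `A`-algebra `B` is an `A`-algebra isomorphism (i.e., bijective). -/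
theorem orzech_ribes (A : Type*) [CommRing A] (B : Type*) [CommRing B] [Algebra A B]
    (hB : Algebra.FiniteType A B) (f : B →ₐ[A] B) (hf : Function.Surjective f) :
    Function.Bijective f := by
  classical
  refine ⟨?_, hf⟩
  obtain ⟨s, hs⟩ := hB.out
  choose g hg using hf
  set A' : Set B := Set.range (algebraMap A B) with hA'
  -- every element lies in the subring generated by s together with finitely many
  -- elements of the image of A
  have htop : ∀ y : B, ∃ C : Finset B, ↑C ⊆ A' ∧ y ∈ Subring.closure (↑C ∪ ↑s) := by
    intro y
    have hy : y ∈ Subring.closure (A' ∪ ↑s) := by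
      have : y ∈ (Algebra.adjoin A (↑s : Set B)).toSubring := by
        rw [hs]; trivial
      rwa [Algebra.adjoin_eq_ring_closure] at this
    induction hy using Subring.closure_induction with
    | mem z hz =>
      rcases hz with hz | hz
      · exact ⟨{z}, by simpa using hz, Subring.subset_closure (by simp)⟩
      · exact ⟨∅, by simp, Subring.subset_closure (by simp [hz])⟩
    | zero => exact ⟨∅, by simp, zero_mem _⟩
    | one => exact ⟨∅, by simp, one_mem _⟩
    | add x y _ _ hx hy =>
      obtain ⟨C₁, hC₁, hx⟩ := hx
      obtain ⟨C₂, hC₂, hy⟩ := hy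
      refine ⟨C₁ ∪ C₂, by simp [Set.union_subset_iff, hC₁, hC₂], add_mem ?_ ?_⟩
      · exact Subring.closure_mono
          (Set.union_subset_union_left _ (Finset.coe_subset.mpr Finset.subset_union_left)) hx
      · exact Subring.closure_mono
          (Set.union_subset_union_left _ (Finset.coe_subset.mpr Finset.subset_union_right)) hy
    | neg x _ hx =>
      obtain ⟨C, hC, hx⟩ := hx
      exact ⟨C, hC, neg_mem hx⟩
    | mul x y _ _ hx hy =>
      obtain ⟨C₁, hC₁, hx⟩ := hx
      obtain ⟨C₂, hC₂, hy⟩ := hy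
      refine ⟨C₁ ∪ C₂, by simp [Set.union_subset_iff, hC₁, hC₂], mul_mem ?_ ?_⟩
      · exact Subring.closure_mono
          (Set.union_subset_union_left _ (Finset.coe_subset.mpr Finset.subset_union_left)) hx
      · exact Subring.closure_mono
          (Set.union_subset_union_left _ (Finset.coe_subset.mpr Finset.subset_union_right)) hy
  rw [injective_iff_map_eq_zero]
  intro x hx
  choose C hCsub hCmem using htop
  -- the finite coefficient set
  let D : Finset B := s.biUnion (fun b => C (f b)) ∪ s.biUnion (fun b => C (g b)) ∪ C x
  have hD : (↑D : Set B) ⊆ A' := by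
    intro t ht
    simp only [D, Finset.coe_union, Set.mem_union, Finset.coe_biUnion, Set.mem_iUnion] at ht
    rcases ht with (⟨b, _, ht⟩ | ⟨b, _, ht⟩) | ht
    · exact hCsub _ ht
    · exact hCsub _ ht
    · exact hCsub _ ht
  let R₀ : Subring B := Subring.closure (↑D ∪ ↑s)
  have hsub : ∀ y : B, (↑(C y) : Set B) ⊆ ↑D →
      y ∈ R₀ := by
    intro y hCy
    exact Subring.closure_mono (Set.union_subset_union_left _ hCy) (hCmem y)
  have hfb : ∀ b ∈ s, f b ∈ R₀ := by
    intro b hb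
    refine hsub _ ?_
    intro t ht
    simp only [D, Finset.coe_union, Set.mem_union, Finset.coe_biUnion, Set.mem_iUnion]
    exact Or.inl (Or.inl ⟨b, hb, ht⟩)
  have hgb : ∀ b ∈ s, g b ∈ R₀ := by
    intro b hb
    refine hsub _ ?_
    intro t ht
    simp only [D, Finset.coe_union, Set.mem_union, Finset.coe_biUnion, Set.mem_iUnion]
    exact Or.inl (Or.inr ⟨b, hb, ht⟩)
  have hxR : x ∈ R₀ := by
    refine hsub _ ?_
    intro t ht
    simp only [D, Finset.coe_union, Set.mem_union, Finset.coe_biUnion, Set.mem_iUnion]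
    exact Or.inr ht
  have hsR : ∀ b ∈ s, b ∈ R₀ := fun b hb =>
    Subring.subset_closure (Or.inr hb)
  have hDR : ∀ d ∈ D, d ∈ R₀ := fun d hd =>
    Subring.subset_closure (Or.inl hd)
  have hfix : ∀ c ∈ A', f c = c := by
    rintro c ⟨a, rfl⟩
    exact f.commutes a
  -- f maps R₀ into R₀
  have hmap_le : R₀.map (f : B →+* B) ≤ R₀ := by
    rw [Subring.map_le_iff_le_comap]
    apply Subring.closure_le.2
    rintro t (ht | ht)
    · simpa [Subring.mem_comap, hfix t (hD ht)] using hDR t ht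
    · simpa [Subring.mem_comap] using hfb t ht
  have hle_map : R₀ ≤ R₀.map (f : B →+* B) := by
    apply Subring.closure_le.2
    rintro t (ht | ht)
    · exact ⟨t, hDR t ht, hfix t (hD ht)⟩
    · exact ⟨g t, hgb t ht, hg t⟩
  have hmap : R₀.map (f : B →+* B) = R₀ := le_antisymm hmap_le hle_map
  haveI : IsNoetherianRing R₀ :=
    is_noetherian_subring_closure _ ((D.finite_toSet).union (s.finite_toSet))
  -- restrict f to an endomorphism of R₀
  let F : R₀ →+* R₀ := ((f : B →+* B).restrict R₀ R₀ (fun y hy => hmap_le ⟨y, hy, rfl⟩))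
  have hFsurj : Function.Surjective F := by
    rintro ⟨y, hy⟩
    rw [← hmap] at hy
    obtain ⟨z, hz, hfz⟩ := hy
    exact ⟨⟨z, hz⟩, Subtype.ext hfz⟩
  have hFinj : Function.Injective F := surj_endo_inj_of_noetherian F hFsurj
  have : F ⟨x, hxR⟩ = F 0 := by
    refine Subtype.ext ?_
    change (f : B →+* B) x = ((F 0 : R₀) : B)
    rw [map_zero]
    exact hx
  have h0 := hFinj this
  exact congrArg Subtype.val h0
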